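/- Let p be a prime, d = p^k + 1, and c ∈ GF(p^gcd(k,n)) with c ≠ 1. Then for every b ∈ GF(p^n), the equation (x+1)^d - c·x^d = b has at most gcd(d, p^n - 1) solutions in GF(p^n), and the power function x^d on GF(p^n) is differentially (c, e)-uniform with e = gcd(d, p^n - 1). -/

import Mathlib

def cDelta {F : Type*} [Field F] [Fintype F] [DecidableEq F]
    (f : F → F) (c a b : F) : ℕ :=
  (Finset.univ.filter (fun x : F => f (x + a) - c * f x = b)).card

def cUnif {F : Type*} [Field F] [Fintype F] [DecidableEq F]
    (f : F → F) (c : F) : ℕ :=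
  Finset.univ.sup fun a : F => Finset.univ.sup fun b : F => cDelta f c a b

open Finset Polynomial

/-- In a finite field, `x ^ d = 1` has exactly `gcd d (q-1)` solutions, for `0 < d`. -/
lemma count_pow_eq_one (F : Type*) [Field F] [Fintype F] [DecidableEq F]
    {d : ℕ} (hd : 0 < d) :
    (Finset.univ.filter (fun x : F => x ^ d = 1)).card
      = Nat.gcd d (Fintype.card F - 1) := by
  set q := Fintype.card F with hq
  set g := Nat.gcd d (q - 1) with hg
  have hq1 : 1 < q := Fintype.one_lt_card
  have hq1' : 0 < q - 1 := by omega
  have hg0 : 0 < g := Nat.gcd_pos_of_pos_left _ hd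
  have hgdvd : g ∣ q - 1 := Nat.gcd_dvd_right _ _
  have hgd : g ∣ d := Nat.gcd_dvd_left _ _
  -- get a primitive g-th root of unity
  obtain ⟨ξ, hξ⟩ := IsCyclic.exists_generator (α := Fˣ)
  have hord : orderOf ξ = q - 1 := by
    rw [orderOf_eq_card_of_forall_mem_zpowers hξ, Nat.card_eq_fintype_card,
      Fintype.card_units]
  have hζord : orderOf (ξ ^ ((q - 1) / g)) = g := by
    rw [orderOf_pow, hord, Nat.gcd_eq_right (Nat.div_dvd_of_dvd hgdvd),
      Nat.div_div_self hgdvd (by omega)]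
  set ζ : Fˣ := ξ ^ ((q - 1) / g)
  have hprim : IsPrimitiveRoot ((ζ : F)) g := by
    rw [IsPrimitiveRoot.coe_units_iff]
    exact hζord ▸ IsPrimitiveRoot.orderOf ζ
  have hset : (Finset.univ.filter (fun x : F => x ^ d = 1)) = nthRootsFinset g (1 : F) := by
    ext x
    simp only [mem_filter, mem_univ, true_and, Polynomial.mem_nthRootsFinset hg0]
    constructor
    · intro hx
      have hx0 : x ≠ 0 := by
        intro h; rw [h, zero_pow hd.ne'] at hx; exact zero_ne_one hx
      have h1 : orderOf x ∣ d := orderOf_dvd_of_pow_eq_one hx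
      have h2 : orderOf x ∣ q - 1 :=
        orderOf_dvd_of_pow_eq_one (FiniteField.pow_card_sub_one_eq_one x hx0)
      exact orderOf_dvd_iff_pow_eq_one.mp (Nat.dvd_gcd h1 h2)
    · intro hx
      obtain ⟨m, hm⟩ := hgd
      rw [hm, pow_mul, hx, one_pow]
  rw [hset, hprim.card_nthRootsFinset]

/-- In a finite field, `x ^ d = u` has at most `gcd d (q-1)` solutions, for `0 < d`. -/
lemma count_pow_le (F : Type*) [Field F] [Fintype F] [DecidableEq F]
    {d : ℕ} (hd : 0 < d) (u : F) :
    (Finset.univ.filter (fun x : F => x ^ d = u)).card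
      ≤ Nat.gcd d (Fintype.card F - 1) := by
  have hg0 : 0 < Nat.gcd d (Fintype.card F - 1) := Nat.gcd_pos_of_pos_left _ hd
  rcases eq_or_ne u 0 with rfl | hu
  · calc (Finset.univ.filter (fun x : F => x ^ d = 0)).card
        ≤ ({0} : Finset F).card := by
          apply Finset.card_le_card
          intro x hx
          simp only [mem_filter, mem_univ, true_and, pow_eq_zero_iff hd.ne'] at hx
          simp [hx]
      _ ≤ _ := by simp only [Finset.card_singleton]; exact hg0
  · rcases (Finset.univ.filter (fun x : F => x ^ d = u)).eq_empty_or_nonempty with h | ⟨y, hy⟩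
    · simp [h]
    · simp only [mem_filter, mem_univ, true_and] at hy
      have hy0 : y ≠ 0 := by
        intro h; rw [h, zero_pow hd.ne'] at hy; exact hu hy.symm
      rw [← count_pow_eq_one F hd]
      apply Finset.card_le_card_of_injOn (fun x => x * y⁻¹)
      · intro x hx
        simp only [Finset.mem_coe, mem_filter, mem_univ, true_and] at hx ⊢
        rw [mul_pow, hx, inv_pow, hy]
        exact mul_inv_cancel₀ hu
      · intro a _ b _ hab
        exact mul_right_cancel₀ (inv_ne_zero hy0) hab

theorem stmt3 {F : Type*} [Field F] [Fintype F] [DecidableEq F]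
    (p n k : ℕ) (hp : p.Prime) (hn : 0 < n) (hk : 0 < k)
    (hcard : Fintype.card F = p ^ n)
    (c : F) (hc : c ≠ 1)
    -- c lies in the subfield GF(p^gcd(k,n)):
    (hcsub : c ^ p ^ Nat.gcd k n = c) :
    (∀ b : F,
      (Finset.univ.filter
        (fun x : F => (x + 1) ^ (p ^ k + 1) - c * x ^ (p ^ k + 1) = b)).card ≤
        Nat.gcd (p ^ k + 1) (p ^ n - 1)) ∧
    cUnif (fun x : F => x ^ (p ^ k + 1)) c = Nat.gcd (p ^ k + 1) (p ^ n - 1) := by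
  have hd : 0 < p ^ k + 1 := Nat.succ_pos _
  set d := p ^ k + 1 with hdref
  -- characteristic of F is p
  have hcharp : CharP F p := by
    have hr : (ringChar F).Prime := CharP.char_is_prime F (ringChar F)
    obtain ⟨m, hm⟩ := FiniteField.card F (ringChar F)
    have : p = ringChar F := by
      have hdvd : p ∣ ringChar F ^ (m : ℕ) := by
        rw [← hm.2, hcard]
        exact dvd_pow_self p hn.ne'
      exact ((Nat.prime_dvd_prime_iff_eq hp hr).mp (hp.dvd_of_dvd_pow hdvd))
    exact this ▸ ringChar.charP F
  haveI := hcharp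
  haveI : Fact p.Prime := ⟨hp⟩
  haveI : ExpChar F p := ExpChar.prime hp
  have hc1 : (1 : F) - c ≠ 0 := sub_ne_zero.mpr (Ne.symm hc)
  set t : F := (1 - c)⁻¹ with htdef
  have h1ct : (1 - c) * t = 1 := mul_inv_cancel₀ hc1
  -- c is fixed by x ↦ x^(p^k)
  have hck : c ^ p ^ k = c := by
    obtain ⟨m, hm⟩ : Nat.gcd k n ∣ k := Nat.gcd_dvd_left _ _
    have key : ∀ m : ℕ, c ^ p ^ (Nat.gcd k n * m) = c := by
      intro m
      induction m with
      | zero => simp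
      | succ m ih =>
        rw [Nat.mul_succ, pow_add, pow_mul, ih, hcsub]
    rw [hm]; exact key m
  have htk : t ^ p ^ k = t := by
    show (1 - c)⁻¹ ^ p ^ k = (1 - c)⁻¹
    rw [inv_pow, sub_pow_char_pow, one_pow, hck]
  -- the key identity
  have key : ∀ x : F, (x + 1) ^ d - c * x ^ d = (1 - c) * (x + t) ^ d + (1 - t) := by
    intro x
    have e1 : (x + 1) ^ d = (x ^ p ^ k + 1) * (x + 1) := by
      rw [hdref, pow_succ, add_pow_char_pow, one_pow]
    have e2 : (x + t) ^ d = (x ^ p ^ k + t) * (x + t) := by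
      rw [hdref, pow_succ, add_pow_char_pow, htk]
    have e3 : x ^ d = x ^ p ^ k * x := by rw [hdref, pow_succ]
    rw [e1, e2, e3]
    linear_combination (-(x ^ p ^ k + x + t)) * h1ct
  have hqcard : Fintype.card F - 1 = p ^ n - 1 := by rw [hcard]
  -- Part 1
  have part1 : ∀ b : F,
      (Finset.univ.filter (fun x : F => (x + 1) ^ d - c * x ^ d = b)).card ≤
        Nat.gcd d (p ^ n - 1) := by
    intro b
    set u : F := (b - (1 - t)) / (1 - c) with hu
    have hcond : ∀ x : F, ((x + 1) ^ d - c * x ^ d = b) ↔ ((x + t) ^ d = u) := by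
      intro x
      rw [key x, hu, eq_div_iff hc1]
      constructor
      · intro h; linear_combination h
      · intro h; linear_combination h
    have hbij : (Finset.univ.filter (fun x : F => (x + 1) ^ d - c * x ^ d = b)).card
        = (Finset.univ.filter (fun y : F => y ^ d = u)).card := by
      apply Finset.card_bij (fun x _ => x + t)
      · intro x hx
        simp only [mem_filter, mem_univ, true_and] at hx ⊢
        exact (hcond x).mp hx
      · intro a _ b _ hab
        exact add_right_cancel hab
      · intro y hy
        refine ⟨y - t, ?_, by ring⟩
        simp only [mem_filter, mem_univ, true_and] at hy ⊢
        rw [hcond]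
        simpa using hy
    rw [hbij, ← hqcard]
    exact count_pow_le F hd u
  refine ⟨part1, ?_⟩
  -- Part 2
  apply le_antisymm
  · apply Finset.sup_le
    intro a _
    apply Finset.sup_le
    intro b _
    unfold cDelta
    rcases eq_or_ne a 0 with rfl | ha
    · have hcond : ∀ x : F, ((x + 0) ^ d - c * x ^ d = b) ↔ (x ^ d = b / (1 - c)) := by
        intro x
        rw [add_zero, eq_div_iff hc1]
        constructor
        · intro h; linear_combination h
        · intro h; linear_combination h
      calc (Finset.univ.filter (fun x : F => (x + 0) ^ d - c * x ^ d = b)).card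
          = (Finset.univ.filter (fun x : F => x ^ d = b / (1 - c))).card := by
            congr 1
            ext x
            simp only [mem_filter, mem_univ, true_and]
            exact hcond x
        _ ≤ _ := by rw [← hqcard]; exact count_pow_le F hd _
    · have had : a ^ d ≠ 0 := pow_ne_zero _ ha
      have hbij : (Finset.univ.filter (fun x : F => (x + a) ^ d - c * x ^ d = b)).card
          = (Finset.univ.filter
              (fun y : F => (y + 1) ^ d - c * y ^ d = b / a ^ d)).card := by
        apply Finset.card_bij (fun x _ => x / a)
        · intro x hx
          simp only [mem_filter, mem_univ, true_and] at hx ⊢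
          have h1 : x / a + 1 = (x + a) / a := by field_simp
          rw [h1, div_pow, div_pow, eq_div_iff had]
          field_simp
          linear_combination hx
        · intro x _ y _ hxy
          have := mul_right_cancel₀ (inv_ne_zero ha) (by
            simpa [div_eq_mul_inv] using hxy)
          exact this
        · intro y hy
          refine ⟨a * y, ?_, by field_simp⟩
          simp only [mem_filter, mem_univ, true_and] at hy ⊢
          rw [eq_div_iff had] at hy
          have h2 : a * y + a = a * (y + 1) := by ring
          rw [h2, mul_pow, mul_pow]
          linear_combination hy
      rw [hbij]
      exact part1 _
  · have hval : cDelta (fun x : F => x ^ d) c 0 (1 - c) = Nat.gcd d (p ^ n - 1) := by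
      unfold cDelta
      have hcond : ∀ x : F, (x + 0) ^ d - c * x ^ d = 1 - c ↔ x ^ d = 1 := by
        intro x
        rw [add_zero]
        constructor
        · intro h
          have : (1 - c) * (x ^ d - 1) = 0 := by linear_combination h
          rcases mul_eq_zero.mp this with h' | h'
          · exact absurd h' hc1
          · exact sub_eq_zero.mp h'
        · intro h; rw [h]; ring
      have : (Finset.univ.filter (fun x : F => (x + 0) ^ d - c * x ^ d = 1 - c))
          = (Finset.univ.filter (fun x : F => x ^ d = 1)) := by
        ext x; simp only [mem_filter, mem_univ, true_and]; exact hcond x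
      rw [this, count_pow_eq_one F hd, hqcard]
    calc Nat.gcd d (p ^ n - 1)
        = cDelta (fun x : F => x ^ d) c 0 (1 - c) := hval.symm
      _ ≤ Finset.univ.sup fun b : F => cDelta (fun x : F => x ^ d) c 0 b :=
          Finset.le_sup (f := fun b : F => cDelta (fun x : F => x ^ d) c 0 b)
            (Finset.mem_univ _)
      _ ≤ cUnif (fun x : F => x ^ d) c := by
          unfold cUnif
          exact Finset.le_sup
            (f := fun a : F => Finset.univ.sup fun b : F =>
              cDelta (fun x : F => x ^ d) c a b) (Finset.mem_univ 0)
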